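/- Let B ⊇ C be a ring extension such that B_C is a progenerator (finitely generated projective generator) as a right C-module. Set A = End(B_C) with B embedded in A via the left regular representation b ↦ λ_b. Then B ⊇ C is right normal (right depth 2: B ⊗_C B ⊕ * ≅ B^m as B-C-bimodules) if and only if the tower A ⊇ B ⊇ C is left relative H-separable (B ⊗_C A ⊕ * ≅ A^n as B-A-bimodules). -/

import Mathlib

/-!  A noncommutative relative tensor product `L ⊗_C R` for a ring `C` mapping
into rings `L` (acting on the right through `f`) and `R` (acting on the left
through `g`), together with the outer left `L`-action `lact`, the outer right
`R`-action `ract`, a lifting principle for balanced biadditive maps, and the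
multiplication map. -/

open scoped TensorProduct

noncomputable section
namespace NCT

variable {C L R : Type*} [Ring C] [Ring L] [Ring R]

/-- The submodule of relations `(l * f c) ⊗ r - l ⊗ (g c * r)`. -/
def rel (f : C →+* L) (g : C →+* R) : Submodule ℤ (L ⊗[ℤ] R) :=
  Submodule.span ℤ
    {x | ∃ (l : L) (c : C) (r : R), x = (l * f c) ⊗ₜ[ℤ] r - l ⊗ₜ[ℤ] (g c * r)}

/-- The relative tensor product `L ⊗_C R`. -/
def Tens (f : C →+* L) (g : C →+* R) : Type _ := (L ⊗[ℤ] R) ⧸ rel f g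

instance (f : C →+* L) (g : C →+* R) : AddCommGroup (Tens f g) :=
  inferInstanceAs (AddCommGroup ((L ⊗[ℤ] R) ⧸ rel f g))

variable (f : C →+* L) (g : C →+* R)

/-- The canonical image of `l ⊗ r` in `L ⊗_C R`. -/
def tmul (l : L) (r : R) : Tens f g := Submodule.Quotient.mk (l ⊗ₜ[ℤ] r)

lemma tmul_rel (l : L) (c : C) (r : R) :
    tmul f g (l * f c) r = tmul f g l (g c * r) := by
  refine (Submodule.Quotient.eq _).2 ?_
  exact Submodule.subset_span ⟨l, c, r, rfl⟩

lemma tmul_add_left (l l' : L) (r : R) :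
    tmul f g (l + l') r = tmul f g l r + tmul f g l' r := by
  show Submodule.Quotient.mk _ = _
  rw [TensorProduct.add_tmul, Submodule.Quotient.mk_add]; rfl

lemma tmul_add_right (l : L) (r r' : R) :
    tmul f g l (r + r') = tmul f g l r + tmul f g l r' := by
  show Submodule.Quotient.mk _ = _
  rw [TensorProduct.tmul_add, Submodule.Quotient.mk_add]; rfl

/-- Package a biadditive map as a bundled `AddMonoidHom`-valued hom. -/
def mkBilin {M N P : Type*} [AddCommGroup M] [AddCommGroup N] [AddCommGroup P]
    (φ : M → N → P)
    (h1 : ∀ m m' n, φ (m + m') n = φ m n + φ m' n)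
    (h2 : ∀ m n n', φ m (n + n') = φ m n + φ m n') : M →+ N →+ P :=
  AddMonoidHom.mk' (fun m => AddMonoidHom.mk' (φ m) (h2 m))
    (fun m m' => by ext n; exact h1 m m' n)

@[simp] lemma mkBilin_apply {M N P : Type*} [AddCommGroup M] [AddCommGroup N] [AddCommGroup P]
    (φ : M → N → P) (h1 h2) (m : M) (n : N) : mkBilin φ h1 h2 m n = φ m n := rfl

/-- Lift a balanced biadditive map to the relative tensor product. -/
def lift {P : Type*} [AddCommGroup P] (φ : L →+ R →+ P)
    (hbal : ∀ l c r, φ (l * f c) r = φ l (g c * r)) : Tens f g →+ P :=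
  (Submodule.liftQ (rel f g)
    (TensorProduct.liftAddHom φ (by
      intro n l r
      simp only [AddMonoidHom.map_zsmul, AddMonoidHom.smul_apply]) ).toIntLinearMap
    (by
      rw [rel, Submodule.span_le]
      rintro x ⟨l, c, r, rfl⟩
      simp only [SetLike.mem_coe, LinearMap.mem_ker, AddMonoidHom.coe_toIntLinearMap,
        map_sub, TensorProduct.liftAddHom_tmul]
      rw [hbal, sub_self])).toAddMonoidHom

@[simp] lemma lift_tmul {P : Type*} [AddCommGroup P] (φ : L →+ R →+ P)
    (hbal : ∀ l c r, φ (l * f c) r = φ l (g c * r)) (l : L) (r : R) :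
    lift f g φ hbal (tmul f g l r) = φ l r := rfl

/-- The outer left action of `L` on `L ⊗_C R`. -/
def lact (l : L) : Tens f g →+ Tens f g :=
  lift f g (mkBilin (fun l' r => tmul f g (l * l') r)
      (fun a b r => by rw [mul_add, tmul_add_left])
      (fun a r s => by rw [tmul_add_right]))
    (fun l' c r => by simp only [mkBilin_apply]; rw [← mul_assoc, tmul_rel])

@[simp] lemma lact_tmul (l l' : L) (r : R) :
    lact f g l (tmul f g l' r) = tmul f g (l * l') r := rfl

/-- The outer right action of `R` on `L ⊗_C R`. -/
def ract (r : R) : Tens f g →+ Tens f g :=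
  lift f g (mkBilin (fun l' r' => tmul f g l' (r' * r))
      (fun a b r' => by rw [tmul_add_left])
      (fun a r' s => by rw [add_mul, tmul_add_right]))
    (fun l' c r' => by simp only [mkBilin_apply]; rw [tmul_rel, mul_assoc])

@[simp] lemma ract_tmul (r r' : R) (l : L) :
    ract f g r (tmul f g l r') = tmul f g l (r' * r) := rfl

/-- The map induced on relative tensor products by a ring map on the left factor. -/
def mapLeft {L' : Type*} [Ring L'] (h : L →+* L') :
    Tens f g →+ Tens (h.comp f) g :=
  lift f g (mkBilin (fun l r => tmul (h.comp f) g (h l) r)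
      (fun a b r => by rw [map_add, tmul_add_left])
      (fun a r s => by rw [tmul_add_right]))
    (fun l c r => by
      simp only [mkBilin_apply, map_mul]
      exact tmul_rel (h.comp f) g (h l) c r)

@[simp] lemma mapLeft_tmul {L' : Type*} [Ring L'] (h : L →+* L') (l : L) (r : R) :
    mapLeft f g h (tmul f g l r) = tmul (h.comp f) g (h l) r := rfl

/-- The multiplication map `L ⊗_C R → R`, `l ⊗ r ↦ jl l * r`, for a ring map
`jl : L → R` compatible with the two maps from `C`. -/
def mulMap (jl : L →+* R) (hcomp : ∀ c, jl (f c) = g c) : Tens f g →+ R :=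
  lift f g (mkBilin (fun l r => jl l * r)
      (fun a b r => by rw [map_add, add_mul])
      (fun a r s => by rw [mul_add]))
    (fun l c r => by simp only [mkBilin_apply]; rw [map_mul, hcomp, mul_assoc])

@[simp] lemma mulMap_tmul (jl : L →+* R) (hcomp : ∀ c, jl (f c) = g c) (l : L) (r : R) :
    mulMap f g jl hcomp (tmul f g l r) = jl l * r := rfl

/-- Induction principle: every element of `L ⊗_C R` is built from `tmul`s. -/
lemma tens_induction {p : Tens f g → Prop} (zero : p 0)
    (tm : ∀ l r, p (tmul f g l r)) (add : ∀ x y, p x → p y → p (x + y)) :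
    ∀ x, p x := by
  intro x
  obtain ⟨y, rfl⟩ := Submodule.Quotient.mk_surjective _ x
  induction y using TensorProduct.induction_on with
  | zero => exact zero
  | tmul l r => exact tm l r
  | add a b ha hb =>
      rw [Submodule.Quotient.mk_add]
      exact add _ _ ha hb

end NCT
end

noncomputable section
open NCT

/-- The tower `A ⊇ B ⊇ C` (given by injective ring maps `ι : C → B`, `j : B → A`) is
*left relative H-separable*: `B ⊗_C A ⊕ * ≅ A^n` as `B`-`A`-bimodules. -/
def LeftRelHSep {C B A : Type*} [Ring C] [Ring B] [Ring A]
    (ι : C →+* B) (j : B →+* A) (n : ℕ) : Prop :=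
  ∃ (i : Tens ι (j.comp ι) →+ (Fin n → A)) (p : (Fin n → A) →+ Tens ι (j.comp ι)),
    (∀ (b : B) x, i (lact ι (j.comp ι) b x) = fun k => j b * i x k) ∧
    (∀ (a : A) x, i (ract ι (j.comp ι) a x) = fun k => i x k * a) ∧
    (∀ (b : B) v, p (fun k => j b * v k) = lact ι (j.comp ι) b (p v)) ∧
    (∀ (a : A) v, p (fun k => v k * a) = ract ι (j.comp ι) a (p v)) ∧
    ∀ x, p (i x) = x

/-- `B` is a *left relative separable extension of `C` in `A`*: the multiplication map
`μ : B ⊗_C A → A` splits as a `B`-`A`-bimodule epimorphism. -/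
def LeftRelSep {C B A : Type*} [Ring C] [Ring B] [Ring A]
    (ι : C →+* B) (j : B →+* A) : Prop :=
  ∃ σ : A →+ Tens ι (j.comp ι),
    (∀ (b : B) (a : A), σ (j b * a) = lact ι (j.comp ι) b (σ a)) ∧
    (∀ (a a' : A), σ (a * a') = ract ι (j.comp ι) a' (σ a)) ∧
    ∀ a, mulMap ι (j.comp ι) j (fun _ => rfl) (σ a) = a

/-- `B ⊇ C` is a separable extension: there is a `B`-central element
`e ∈ B ⊗_C B` with `μ(e) = 1`. -/
def IsSepExt {C B : Type*} [Ring C] [Ring B] (ι : C →+* B) : Prop :=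
  ∃ e : Tens ι ι, (∀ b : B, lact ι ι b e = ract ι ι b e) ∧
    mulMap ι ι (RingHom.id B) (fun _ => rfl) e = 1

/-- `B` as a right `C`-module, via `ι`. -/
def rmod {C B : Type*} [Ring C] [Ring B] (ι : C →+* B) : Module Cᵐᵒᵖ B :=
  Module.compHom B (RingHom.op ι)

/-- `End(B_C)`: the ring of right `C`-linear endomorphisms of `B`. -/
def EndC {C B : Type*} [Ring C] [Ring B] (ι : C →+* B) : Type _ :=
  letI := rmod ι
  B →ₗ[Cᵐᵒᵖ] B

noncomputable instance {C B : Type*} [Ring C] [Ring B] (ι : C →+* B) : Ring (EndC ι) :=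
  letI := rmod ι
  (inferInstance : Ring (Module.End Cᵐᵒᵖ B))

/-- The left regular representation `λ : B → End(B_C)`, `b ↦ (x ↦ b * x)`. -/
def lam {C B : Type*} [Ring C] [Ring B] (ι : C →+* B) : B →+* EndC ι :=
  letI := rmod ι
  { toFun := fun b =>
      { toFun := fun x => b * x
        map_add' := fun x y => mul_add b x y
        map_smul' := fun c x => (mul_assoc b x (ι c.unop)).symm }
    map_one' := by apply LinearMap.ext; intro x; exact one_mul x
    map_mul' := fun b b' => by apply LinearMap.ext; intro x; exact mul_assoc b b' x
    map_zero' := by apply LinearMap.ext; intro x; exact zero_mul x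
    map_add' := fun b b' => by apply LinearMap.ext; intro x; exact add_mul b b' x }

namespace NCT
section Generic
variable {C L R : Type*} [Ring C] [Ring L] [Ring R] (f : C →+* L) (g : C →+* R)

lemma ract_ract (r r' : R) (z : Tens f g) :
    ract f g r' (ract f g r z) = ract f g (r * r') z := by
  induction z using tens_induction with
  | zero => simp [map_zero]
  | tm l s => simp [mul_assoc]
  | add x y hx hy => simp [map_add, hx, hy]

lemma ract_lact (r : R) (l : L) (z : Tens f g) :
    ract f g r (lact f g l z) = lact f g l (ract f g r z) := by
  induction z using tens_induction with
  | zero => simp [map_zero]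
  | tm l' s => simp
  | add x y hx hy => simp [map_add, hx, hy]

lemma tmul_sum {κ : Type*} (s : Finset κ) (l : L) (r : κ → R) :
    tmul f g l (∑ k ∈ s, r k) = ∑ k ∈ s, tmul f g l (r k) :=
  map_sum (AddMonoidHom.mk' (tmul f g l) (tmul_add_right f g l)) r s

end Generic
end NCT

section Aux
open NCT
variable {C B : Type*} [Ring C] [Ring B] (ι : C →+* B)

/-- Evaluation of an element of `EndC ι`. -/
def ev (a : EndC ι) (x : B) : B :=
  letI := rmod ι
  let a' : B →ₗ[Cᵐᵒᵖ] B := a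
  a' x

lemma ev_add_right (a : EndC ι) (x y : B) : ev ι a (x + y) = ev ι a x + ev ι a y := by
  letI := rmod ι
  let a' : B →ₗ[Cᵐᵒᵖ] B := a
  exact a'.map_add x y

lemma ev_c (a : EndC ι) (x : B) (c : C) : ev ι a (x * ι c) = ev ι a x * ι c := by
  letI := rmod ι
  let a' : B →ₗ[Cᵐᵒᵖ] B := a
  exact a'.map_smul (MulOpposite.op c) x

lemma ev_add_left (a a' : EndC ι) (x : B) : ev ι (a + a') x = ev ι a x + ev ι a' x := rfl

lemma ev_mul (a a' : EndC ι) (x : B) : ev ι (a * a') x = ev ι a (ev ι a' x) := rfl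

lemma ev_lam (b x : B) : ev ι (lam ι b) x = b * x := rfl

lemma endc_ext {a a' : EndC ι} (h : ∀ x, ev ι a x = ev ι a' x) : a = a' := by
  letI := rmod ι
  let a1 : B →ₗ[Cᵐᵒᵖ] B := a
  let a2 : B →ₗ[Cᵐᵒᵖ] B := a'
  show a1 = a2
  exact LinearMap.ext fun x => h x

/-- Evaluation at a point as an additive hom. -/
def evA (x : B) : EndC ι →+ B := AddMonoidHom.mk' (fun a => ev ι a x) (fun _ _ => rfl)

/-- Evaluation of an endomorphism as an additive hom. -/
def evB (a : EndC ι) : B →+ B := AddMonoidHom.mk' (ev ι a) (ev_add_right ι a)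

/-- Construct an element of `EndC ι`. -/
def mkEnd (f : B → B) (hadd : ∀ x y, f (x + y) = f x + f y)
    (hc : ∀ x c, f (x * ι c) = f x * ι c) : EndC ι :=
  letI := rmod ι
  { toFun := f, map_add' := hadd, map_smul' := fun c x => hc x c.unop }

@[simp] lemma ev_mkEnd (f : B → B) (hadd hc) (x : B) :
    ev ι (mkEnd ι f hadd hc) x = f x := rfl

/-- `B ⊗_C B → B ⊗_C A`, `b ⊗ b' ↦ b ⊗ λ_{b'}`. -/
def Gmap : Tens ι ι →+ Tens ι ((lam ι).comp ι) :=
  lift ι ι (mkBilin (fun b b' => tmul ι ((lam ι).comp ι) b (lam ι b'))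
      (fun a b r => by rw [tmul_add_left])
      (fun a r s => by rw [map_add, tmul_add_right]))
    (fun l c r => by
      simp only [mkBilin_apply, map_mul]
      exact tmul_rel ι ((lam ι).comp ι) l c (lam ι r))

@[simp] lemma Gmap_tmul (l r : B) :
    Gmap ι (tmul ι ι l r) = tmul ι ((lam ι).comp ι) l (lam ι r) := rfl

/-- `B ⊗_C A → B ⊗_C B`, `b ⊗ a ↦ b ⊗ a(t)`. -/
def Emap (t : B) : Tens ι ((lam ι).comp ι) →+ Tens ι ι :=
  lift ι ((lam ι).comp ι) (mkBilin (fun b a => tmul ι ι b (ev ι a t))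
      (fun x y a => by rw [tmul_add_left])
      (fun x a a' => by rw [ev_add_left, tmul_add_right]))
    (fun l c a => by
      simp only [mkBilin_apply]
      have h : ev ι (((lam ι).comp ι) c * a) t = ι c * ev ι a t := rfl
      rw [h]
      exact tmul_rel ι ι l c (ev ι a t))

@[simp] lemma Emap_tmul (t l : B) (a : EndC ι) :
    Emap ι t (tmul ι ((lam ι).comp ι) l a) = tmul ι ι l (ev ι a t) := rfl

lemma Gmap_lact (b : B) (z : Tens ι ι) :
    Gmap ι (lact ι ι b z) = lact ι ((lam ι).comp ι) b (Gmap ι z) := by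
  induction z using tens_induction with
  | zero => simp [map_zero]
  | tm l r => rfl
  | add x y hx hy => simp [map_add, hx, hy]

lemma Gmap_ract (c : C) (z : Tens ι ι) :
    Gmap ι (ract ι ι (ι c) z) = ract ι ((lam ι).comp ι) (((lam ι).comp ι) c) (Gmap ι z) := by
  induction z using tens_induction with
  | zero => simp [map_zero]
  | tm l r =>
      show tmul ι ((lam ι).comp ι) l (lam ι (r * ι c)) =
        tmul ι ((lam ι).comp ι) l (lam ι r * ((lam ι).comp ι) c)
      rw [map_mul]; rfl
  | add x y hx hy => simp [map_add, hx, hy]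

lemma Emap_lact (t b : B) (z : Tens ι ((lam ι).comp ι)) :
    Emap ι t (lact ι ((lam ι).comp ι) b z) = lact ι ι b (Emap ι t z) := by
  induction z using tens_induction with
  | zero => simp [map_zero]
  | tm l a => rfl
  | add x y hx hy => simp [map_add, hx, hy]

lemma Emap_ract (t : B) (a : EndC ι) (z : Tens ι ((lam ι).comp ι)) :
    Emap ι t (ract ι ((lam ι).comp ι) a z) = Emap ι (ev ι a t) z := by
  induction z using tens_induction with
  | zero => simp [map_zero]
  | tm l a' => rfl
  | add x y hx hy => simp [map_add, hx, hy]

lemma Emap_add_t (t t' : B) (z : Tens ι ((lam ι).comp ι)) :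
    Emap ι (t + t') z = Emap ι t z + Emap ι t' z := by
  induction z using tens_induction with
  | zero => simp [map_zero]
  | tm l a => show tmul ι ι l (ev ι a (t + t')) = _; rw [ev_add_right, tmul_add_right]; rfl
  | add x y hx hy => simp only [map_add, hx, hy]; abel

lemma Emap_c (t : B) (c : C) (z : Tens ι ((lam ι).comp ι)) :
    Emap ι (t * ι c) z = ract ι ι (ι c) (Emap ι t z) := by
  induction z using tens_induction with
  | zero => simp [map_zero]
  | tm l a => show tmul ι ι l (ev ι a (t * ι c)) = tmul ι ι l (ev ι a t * ι c); rw [ev_c]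
  | add x y hx hy => simp [map_add, hx, hy]

lemma Emap_one_Gmap (z : Tens ι ι) : Emap ι 1 (Gmap ι z) = z := by
  induction z using tens_induction with
  | zero => simp [map_zero]
  | tm l r => show tmul ι ι l (r * 1) = tmul ι ι l r; rw [mul_one]
  | add x y hx hy => simp [map_add, hx, hy]

end Aux

namespace NCT
section Generic2
variable {C L R : Type*} [Ring C] [Ring L] [Ring R] (f : C →+* L) (g : C →+* R)

lemma ract_add_r (r r' : R) (z : Tens f g) :
    ract f g (r + r') z = ract f g r z + ract f g r' z := by
  induction z using tens_induction with
  | zero => simp [map_zero]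
  | tm l s => simp [mul_add, tmul_add_right]
  | add x y hx hy => simp only [map_add, hx, hy]; abel

/-- `r ↦ ract r z` as an additive hom. -/
def ractR (z : Tens f g) : R →+ Tens f g :=
  AddMonoidHom.mk' (fun r => ract f g r z) (fun r r' => ract_add_r f g r r' z)

lemma ract_sum {κ : Type*} (s : Finset κ) (r : κ → R) (z : Tens f g) :
    ract f g (∑ k ∈ s, r k) z = ∑ k ∈ s, ract f g (r k) z :=
  map_sum (ractR f g z) r s

end Generic2
end NCT

section Aux2
open NCT
variable {C B : Type*} [Ring C] [Ring B] (ι : C →+* B)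

lemma ev_sum_right {κ : Type*} (s : Finset κ) (a : EndC ι) (f : κ → B) :
    ev ι a (∑ k ∈ s, f k) = ∑ k ∈ s, ev ι a (f k) :=
  map_sum (evB ι a) f s

lemma ev_sum_left {κ : Type*} (s : Finset κ) (f : κ → EndC ι) (t : B) :
    ev ι (∑ k ∈ s, f k) t = ∑ k ∈ s, ev ι (f k) t :=
  map_sum (evA ι t) f s

lemma Emap_one_ract_c (c : C) (z : Tens ι ((lam ι).comp ι)) :
    Emap ι 1 (ract ι ((lam ι).comp ι) (((lam ι).comp ι) c) z) =
      ract ι ι (ι c) (Emap ι 1 z) := by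
  rw [Emap_ract]
  have h : ev ι (((lam ι).comp ι) c) 1 = 1 * ι c := by
    show ι c * 1 = 1 * ι c
    rw [mul_one, one_mul]
  rw [h, Emap_c]

lemma pi_single_mul_left {n : ℕ} {A : Type*} [Ring A] (k : Fin n) (a w : A) :
    (fun k' => a * (Pi.single k w : Fin n → A) k') = (Pi.single k (a * w) : Fin n → A) := by
  funext k'
  rcases eq_or_ne k' k with h | h
  · subst h; rw [Pi.single_eq_same, Pi.single_eq_same]
  · rw [Pi.single_eq_of_ne h, Pi.single_eq_of_ne h, mul_zero]

lemma pi_single_mul_right {n : ℕ} {A : Type*} [Ring A] (k : Fin n) (a w : A) :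
    (fun k' => (Pi.single k w : Fin n → A) k' * a) = (Pi.single k (w * a) : Fin n → A) := by
  funext k'
  rcases eq_or_ne k' k with h | h
  · subst h; rw [Pi.single_eq_same, Pi.single_eq_same]
  · rw [Pi.single_eq_of_ne h, Pi.single_eq_of_ne h, zero_mul]

end Aux2

section MainLemmas
open NCT
variable {C B : Type*} [Ring C] [Ring B] (ι : C →+* B)

lemma fwd_dir
    (hfgp : ∃ (N : ℕ) (x : Fin N → B) (φ : Fin N → (B →+ C)),
      (∀ (k : Fin N) (b : B) (c : C), φ k (b * ι c) = φ k b * c) ∧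
      ∀ b : B, b = ∑ k, x k * ι (φ k b))
    (h : ∃ (m : ℕ) (i : Tens ι ι →+ (Fin m → B)) (p : (Fin m → B) →+ Tens ι ι),
      (∀ (b : B) x, i (lact ι ι b x) = fun k => b * i x k) ∧
      (∀ (c : C) x, i (ract ι ι (ι c) x) = fun k => i x k * ι c) ∧
      (∀ (b : B) v, p (fun k => b * v k) = lact ι ι b (p v)) ∧
      (∀ (c : C) v, p (fun k => v k * ι c) = ract ι ι (ι c) (p v)) ∧
      ∀ x, p (i x) = x) :
    ∃ n, LeftRelHSep ι (lam ι) n := by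
  obtain ⟨N, x, φ, hφ, hx⟩ := hfgp
  obtain ⟨m, i, p, hil, hic, hpl, hpc, hpi⟩ := h
  refine ⟨m, ?_⟩
  -- the dual-basis endomorphisms `e_k : t ↦ ι (φ k t)`
  let eφ : Fin N → EndC ι := fun k =>
    mkEnd ι (fun t => ι (φ k t)) (fun a b => by simp only [map_add])
      (fun t c => by rw [hφ, map_mul])
  -- the section `B ⊗_C A → A^m`
  let I : Tens ι ((lam ι).comp ι) → (Fin m → EndC ι) := fun z k =>
    mkEnd ι (fun t => i (Emap ι t z) k)
      (fun t t' => by simp only [Emap_add_t, map_add, Pi.add_apply])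
      (fun t c => by simp only [Emap_c, hic])
  let i' : Tens ι ((lam ι).comp ι) →+ (Fin m → EndC ι) :=
    AddMonoidHom.mk' I (by
      intro z z'
      funext k
      refine endc_ext ι fun t => ?_
      show i (Emap ι t (z + z')) k = i (Emap ι t z) k + i (Emap ι t z') k
      simp only [map_add, Pi.add_apply])
  -- the retraction `A^m → B ⊗_C A`
  let P : (Fin m → EndC ι) → Tens ι ((lam ι).comp ι) := fun v =>
    ∑ k, ract ι ((lam ι).comp ι) (eφ k) (Gmap ι (p (fun s => ev ι (v s) (x k))))
  let p' : (Fin m → EndC ι) →+ Tens ι ((lam ι).comp ι) :=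
    AddMonoidHom.mk' P (by
      intro v w
      have h1 : ∀ k : Fin N, (fun s => ev ι ((v + w) s) (x k)) =
          (fun s => ev ι (v s) (x k)) + fun s => ev ι (w s) (x k) := fun _ => rfl
      show (∑ k, ract ι ((lam ι).comp ι) (eφ k)
          (Gmap ι (p (fun s => ev ι ((v + w) s) (x k))))) = P v + P w
      simp only [h1, map_add]
      rw [Finset.sum_add_distrib])
  have keyA : ∀ (a : EndC ι) (k' : Fin N),
      (∑ k, ((lam ι).comp ι) (φ k' (ev ι a (x k))) * eφ k) = eφ k' * a := by
    intro a k'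
    refine endc_ext ι fun t => ?_
    rw [ev_sum_left]
    calc (∑ k, ev ι (((lam ι).comp ι) (φ k' (ev ι a (x k))) * eφ k) t)
        = ∑ k, ι (φ k' (ev ι a (x k * ι (φ k t)))) :=
          Finset.sum_congr rfl fun k _ => by
            show ι (φ k' (ev ι a (x k))) * ι (φ k t) = _
            rw [← map_mul, ← hφ, ← ev_c]
      _ = ι (φ k' (ev ι a (∑ k, x k * ι (φ k t)))) := by
          rw [ev_sum_right, map_sum (φ k'), map_sum ι]
      _ = ι (φ k' (ev ι a t)) := by rw [← hx t]
  have keyB : ∀ a : EndC ι, (∑ k, lam ι (ev ι a (x k)) * eφ k) = a := by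
    intro a
    refine endc_ext ι fun t => ?_
    rw [ev_sum_left]
    calc (∑ k, ev ι (lam ι (ev ι a (x k)) * eφ k) t)
        = ∑ k, ev ι a (x k * ι (φ k t)) :=
          Finset.sum_congr rfl fun k _ => by
            show ev ι a (x k) * ι (φ k t) = _
            rw [← ev_c]
      _ = ev ι a (∑ k, x k * ι (φ k t)) := (ev_sum_right ι Finset.univ a _).symm
      _ = ev ι a t := by rw [← hx t]
  have prop1 : ∀ (b : B) z,
      i' (lact ι ((lam ι).comp ι) b z) = fun k => lam ι b * i' z k := by
    intro b z
    funext k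
    refine endc_ext ι fun t => ?_
    show i (Emap ι t (lact ι ((lam ι).comp ι) b z)) k = b * i (Emap ι t z) k
    rw [Emap_lact, hil b (Emap ι t z)]
  have prop2 : ∀ (a : EndC ι) z,
      i' (ract ι ((lam ι).comp ι) a z) = fun k => i' z k * a := by
    intro a z
    funext k
    refine endc_ext ι fun t => ?_
    show i (Emap ι t (ract ι ((lam ι).comp ι) a z)) k = i (Emap ι (ev ι a t) z) k
    rw [Emap_ract]
  have prop3 : ∀ (b : B) v,
      p' (fun k => lam ι b * v k) = lact ι ((lam ι).comp ι) b (p' v) := by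
    intro b v
    show (∑ k, ract ι ((lam ι).comp ι) (eφ k)
        (Gmap ι (p (fun s => ev ι (lam ι b * v s) (x k)))))
      = lact ι ((lam ι).comp ι) b (∑ k, ract ι ((lam ι).comp ι) (eφ k)
          (Gmap ι (p (fun s => ev ι (v s) (x k)))))
    rw [map_sum (lact ι ((lam ι).comp ι) b)]
    refine Finset.sum_congr rfl fun k _ => ?_
    rw [show p (fun s => ev ι (lam ι b * v s) (x k)) =
          lact ι ι b (p fun s => ev ι (v s) (x k)) from hpl b _,
        Gmap_lact, ract_lact]
  have prop4 : ∀ (a : EndC ι) v,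
      p' (fun k => v k * a) = ract ι ((lam ι).comp ι) a (p' v) := by
    intro a v
    have step1 : ∀ k : Fin N,
        ract ι ((lam ι).comp ι) (eφ k) (Gmap ι (p fun s => ev ι (v s * a) (x k)))
        = ∑ k', ract ι ((lam ι).comp ι) (((lam ι).comp ι) (φ k' (ev ι a (x k))) * eφ k)
            (Gmap ι (p fun s => ev ι (v s) (x k'))) := by
      intro k
      have e1 : (fun s => ev ι (v s * a) (x k)) =
          ∑ k', (fun s => ev ι (v s) (x k') * ι (φ k' (ev ι a (x k)))) := by
        funext s
        simp only [Finset.sum_apply]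
        show ev ι (v s) (ev ι a (x k)) = _
        conv_lhs => rw [hx (ev ι a (x k))]
        rw [ev_sum_right]
        exact Finset.sum_congr rfl fun k' _ => ev_c ι (v s) (x k') _
      rw [e1, map_sum p]
      calc ract ι ((lam ι).comp ι) (eφ k)
            (Gmap ι (∑ k', p fun s => ev ι (v s) (x k') * ι (φ k' (ev ι a (x k)))))
          = ract ι ((lam ι).comp ι) (eφ k)
              (Gmap ι (∑ k', ract ι ι (ι (φ k' (ev ι a (x k))))
                (p fun s => ev ι (v s) (x k')))) := by
            refine congrArg _ (congrArg _ (Finset.sum_congr rfl fun k' _ => ?_))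
            exact hpc (φ k' (ev ι a (x k))) (fun s => ev ι (v s) (x k'))
        _ = ract ι ((lam ι).comp ι) (eφ k)
              (∑ k', ract ι ((lam ι).comp ι) (((lam ι).comp ι) (φ k' (ev ι a (x k))))
                (Gmap ι (p fun s => ev ι (v s) (x k')))) := by
            rw [map_sum (Gmap ι)]
            exact congrArg _ (Finset.sum_congr rfl fun k' _ => Gmap_ract ι _ _)
        _ = ∑ k', ract ι ((lam ι).comp ι) (((lam ι).comp ι) (φ k' (ev ι a (x k))) * eφ k)
              (Gmap ι (p fun s => ev ι (v s) (x k'))) := by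
            rw [map_sum (ract ι ((lam ι).comp ι) (eφ k))]
            exact Finset.sum_congr rfl fun k' _ => ract_ract ι ((lam ι).comp ι) _ _ _
    show (∑ k, ract ι ((lam ι).comp ι) (eφ k)
        (Gmap ι (p fun s => ev ι (v s * a) (x k))))
      = ract ι ((lam ι).comp ι) a (∑ k', ract ι ((lam ι).comp ι) (eφ k')
          (Gmap ι (p fun s => ev ι (v s) (x k'))))
    calc (∑ k, ract ι ((lam ι).comp ι) (eφ k)
          (Gmap ι (p fun s => ev ι (v s * a) (x k))))
        = ∑ k, ∑ k', ract ι ((lam ι).comp ι)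
            (((lam ι).comp ι) (φ k' (ev ι a (x k))) * eφ k)
            (Gmap ι (p fun s => ev ι (v s) (x k'))) :=
          Finset.sum_congr rfl fun k _ => step1 k
      _ = ∑ k', ∑ k, ract ι ((lam ι).comp ι)
            (((lam ι).comp ι) (φ k' (ev ι a (x k))) * eφ k)
            (Gmap ι (p fun s => ev ι (v s) (x k'))) := Finset.sum_comm
      _ = ∑ k', ract ι ((lam ι).comp ι) (eφ k' * a)
            (Gmap ι (p fun s => ev ι (v s) (x k'))) :=
          Finset.sum_congr rfl fun k' _ => by rw [← ract_sum, keyA a k']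
      _ = ract ι ((lam ι).comp ι) a (∑ k', ract ι ((lam ι).comp ι) (eφ k')
            (Gmap ι (p fun s => ev ι (v s) (x k')))) := by
          rw [map_sum (ract ι ((lam ι).comp ι) a)]
          exact Finset.sum_congr rfl fun k' _ =>
            (ract_ract ι ((lam ι).comp ι) (eφ k') a _).symm
  have key2 : ∀ z : Tens ι ((lam ι).comp ι),
      (∑ k, ract ι ((lam ι).comp ι) (eφ k) (Gmap ι (Emap ι (x k) z))) = z := by
    intro z
    induction z using tens_induction with
    | zero => simp [map_zero, Finset.sum_const_zero]
    | tm l a =>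
        calc (∑ k, ract ι ((lam ι).comp ι) (eφ k)
              (Gmap ι (Emap ι (x k) (tmul ι ((lam ι).comp ι) l a))))
            = ∑ k, tmul ι ((lam ι).comp ι) l (lam ι (ev ι a (x k)) * eφ k) :=
              Finset.sum_congr rfl fun k _ => rfl
          _ = tmul ι ((lam ι).comp ι) l (∑ k, lam ι (ev ι a (x k)) * eφ k) :=
              (tmul_sum ι ((lam ι).comp ι) Finset.univ l _).symm
          _ = tmul ι ((lam ι).comp ι) l a := by rw [keyB a]
    | add u w hu hw =>
        simp only [map_add]
        rw [Finset.sum_add_distrib, hu, hw]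
  have prop5 : ∀ z, p' (i' z) = z := by
    intro z
    show (∑ k, ract ι ((lam ι).comp ι) (eφ k)
        (Gmap ι (p (i (Emap ι (x k) z))))) = z
    calc (∑ k, ract ι ((lam ι).comp ι) (eφ k)
          (Gmap ι (p (i (Emap ι (x k) z)))))
        = ∑ k, ract ι ((lam ι).comp ι) (eφ k) (Gmap ι (Emap ι (x k) z)) :=
          Finset.sum_congr rfl fun k _ => by rw [hpi]
      _ = z := key2 z
  unfold LeftRelHSep
  exact ⟨i', p', prop1, prop2, prop3, prop4, prop5⟩

end MainLemmas

section MainLemmas2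
open NCT
variable {C B : Type*} [Ring C] [Ring B] (ι : C →+* B)

lemma bwd_dir (h : ∃ n, LeftRelHSep ι (lam ι) n) :
    ∃ (m : ℕ) (i : Tens ι ι →+ (Fin m → B)) (p : (Fin m → B) →+ Tens ι ι),
      (∀ (b : B) x, i (lact ι ι b x) = fun k => b * i x k) ∧
      (∀ (c : C) x, i (ract ι ι (ι c) x) = fun k => i x k * ι c) ∧
      (∀ (b : B) v, p (fun k => b * v k) = lact ι ι b (p v)) ∧
      (∀ (c : C) v, p (fun k => v k * ι c) = ract ι ι (ι c) (p v)) ∧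
      ∀ x, p (i x) = x := by
  obtain ⟨n, h⟩ := h
  unfold LeftRelHSep at h
  obtain ⟨i', p', h1, h2, h3, h4, h5⟩ := h
  refine ⟨n, ?_, ?_, ?_, ?_, ?_, ?_, ?_⟩
  · exact AddMonoidHom.mk' (fun z k => ev ι (i' (Gmap ι z) k) 1) (by
      intro z z'
      funext k
      show ev ι (i' (Gmap ι (z + z')) k) 1 = _
      simp only [map_add, Pi.add_apply, ev_add_left])
  · exact AddMonoidHom.mk' (fun v => ∑ k, Emap ι 1 (p' (Pi.single k (lam ι (v k))))) (by
      intro v w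
      simp only [Pi.add_apply, map_add, Pi.single_add, Finset.sum_add_distrib])
  · -- left B-linearity of i₂
    intro b z
    funext k
    show ev ι (i' (Gmap ι (lact ι ι b z)) k) 1 = b * ev ι (i' (Gmap ι z) k) 1
    rw [Gmap_lact, h1 b (Gmap ι z)]
    exact rfl
  · -- right C-linearity of i₂
    intro c z
    funext k
    show ev ι (i' (Gmap ι (ract ι ι (ι c) z)) k) 1 = ev ι (i' (Gmap ι z) k) 1 * ι c
    rw [Gmap_ract, h2 (((lam ι).comp ι) c) (Gmap ι z)]
    show ev ι (i' (Gmap ι z) k) (ι c * 1) = _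
    conv_lhs => rw [mul_one, ← one_mul (ι c), ev_c]
  · -- left B-linearity of p₂
    intro b v
    show (∑ k, Emap ι 1 (p' (Pi.single k (lam ι (b * v k)))))
      = lact ι ι b (∑ k, Emap ι 1 (p' (Pi.single k (lam ι (v k)))))
    rw [map_sum (lact ι ι b)]
    refine Finset.sum_congr rfl fun k _ => ?_
    rw [show (Pi.single k (lam ι (b * v k)) : Fin n → EndC ι)
          = fun k' => lam ι b * (Pi.single k (lam ι (v k)) : Fin n → EndC ι) k' from by
        rw [pi_single_mul_left, ← map_mul],
      h3 b (Pi.single k (lam ι (v k))), Emap_lact]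
  · -- right C-linearity of p₂
    intro c v
    show (∑ k, Emap ι 1 (p' (Pi.single k (lam ι (v k * ι c)))))
      = ract ι ι (ι c) (∑ k, Emap ι 1 (p' (Pi.single k (lam ι (v k)))))
    rw [map_sum (ract ι ι (ι c))]
    refine Finset.sum_congr rfl fun k _ => ?_
    rw [show (Pi.single k (lam ι (v k * ι c)) : Fin n → EndC ι)
          = fun k' => (Pi.single k (lam ι (v k)) : Fin n → EndC ι) k' * ((lam ι).comp ι) c from by
        rw [pi_single_mul_right, map_mul, RingHom.comp_apply],
      h4 (((lam ι).comp ι) c) (Pi.single k (lam ι (v k))), Emap_one_ract_c]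
  · -- retraction
    intro z
    have key : ∀ (k : Fin n) (a : EndC ι),
        Emap ι 1 (p' (Pi.single k (lam ι (ev ι a 1)))) = Emap ι 1 (p' (Pi.single k a)) := by
      intro k a
      have e1 : (Pi.single k (lam ι (ev ι a 1)) : Fin n → EndC ι)
          = fun k' => (Pi.single k (1 : EndC ι) : Fin n → EndC ι) k' * lam ι (ev ι a 1) := by
        rw [pi_single_mul_right, one_mul]
      have e2 : (Pi.single k a : Fin n → EndC ι)
          = fun k' => (Pi.single k (1 : EndC ι) : Fin n → EndC ι) k' * a := by
        rw [pi_single_mul_right, one_mul]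
      rw [e1, h4 (lam ι (ev ι a 1)) (Pi.single k 1), e2, h4 a (Pi.single k 1),
        Emap_ract, Emap_ract,
        show ev ι (lam ι (ev ι a 1)) 1 = ev ι a 1 from by rw [ev_lam, mul_one]]
    show (∑ k, Emap ι 1 (p' (Pi.single k (lam ι (ev ι (i' (Gmap ι z) k) 1))))) = z
    calc (∑ k, Emap ι 1 (p' (Pi.single k (lam ι (ev ι (i' (Gmap ι z) k) 1)))))
        = ∑ k, Emap ι 1 (p' (Pi.single k (i' (Gmap ι z) k))) :=
          Finset.sum_congr rfl fun k _ => key k _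
      _ = Emap ι 1 (p' (∑ k, Pi.single k (i' (Gmap ι z) k))) := by
          rw [map_sum p', map_sum (Emap ι 1)]
      _ = Emap ι 1 (p' (i' (Gmap ι z))) := by rw [Finset.univ_sum_single]
      _ = z := by rw [h5, Emap_one_Gmap]

end MainLemmas2
/-- for a ring extension `B ⊇ C` with `B_C` a progenerator and
`A = End(B_C)` (with `B` embedded by the left regular representation), `B ⊇ C` is
right normal (right depth 2) iff the tower `A ⊇ B ⊇ C` is left relative H-separable. -/
theorem rightDepthTwo_iff_leftRelHSep
    {C B : Type*} [Ring C] [Ring B] (ι : C →+* B) (hι : Function.Injective ι)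
    -- `B_C` is finitely generated projective (dual bases)
    (hfgp : ∃ (N : ℕ) (x : Fin N → B) (φ : Fin N → (B →+ C)),
      (∀ (k : Fin N) (b : B) (c : C), φ k (b * ι c) = φ k b * c) ∧
      ∀ b : B, b = ∑ k, x k * ι (φ k b))
    -- `B_C` is a generator (the trace ideal contains `1`)
    (hgen : ∃ (N : ℕ) (ψ : Fin N → (B →+ C)) (y : Fin N → B),
      (∀ (k : Fin N) (b : B) (c : C), ψ k (b * ι c) = ψ k b * c) ∧
      ∑ k, ψ k (y k) = 1) :
    -- right depth 2: `B ⊗_C B ⊕ * ≅ B^m` as `B`-`C`-bimodules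
    (∃ (m : ℕ) (i : Tens ι ι →+ (Fin m → B)) (p : (Fin m → B) →+ Tens ι ι),
      (∀ (b : B) x, i (lact ι ι b x) = fun k => b * i x k) ∧
      (∀ (c : C) x, i (ract ι ι (ι c) x) = fun k => i x k * ι c) ∧
      (∀ (b : B) v, p (fun k => b * v k) = lact ι ι b (p v)) ∧
      (∀ (c : C) v, p (fun k => v k * ι c) = ract ι ι (ι c) (p v)) ∧
      ∀ x, p (i x) = x) ↔
    (∃ n, LeftRelHSep ι (lam ι) n) := by
  constructor
  · exact fun h => fwd_dir ι hfgp h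
  · exact fun h => bwd_dir ι h

end
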